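/- Let H_1, …, H_N be symmetric positive semidefinite d×d real matrices, let H be a random matrix uniform on {H_1, …, H_N}, and let η > 0. Suppose η·λ_max(H_i) > 2 for some i. Then ‖E[(I − ηH)^{⊗k}]‖ → ∞ as k → ∞, where (·)^{⊗k} denotes the k-th Kronecker power and ‖·‖ the operator (spectral) norm. -/

import Mathlib

open Filter Matrix
open scoped RealInnerProductSpace

/-- The `k`-th Kronecker power of a `d × d` matrix, indexed by functions
`Fin k → Fin d`: `(A^{⊗k})_{f,g} = ∏ j, A (f j) (g j)`. -/
def kronPow {d : ℕ} (A : Matrix (Fin d) (Fin d) ℝ) (k : ℕ) :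
    Matrix (Fin k → Fin d) (Fin k → Fin d) ℝ :=
  Matrix.of fun f g => ∏ j, A (f j) (g j)

lemma kron_quad {d k : ℕ} (A : Matrix (Fin d) (Fin d) ℝ) (u : Fin d → ℝ) :
    (fun f : Fin k → Fin d => ∏ j, u (f j)) ⬝ᵥ
      (kronPow A k).mulVec (fun f : Fin k → Fin d => ∏ j, u (f j))
      = (u ⬝ᵥ A.mulVec u) ^ k := by
  have h1 : (u ⬝ᵥ A.mulVec u) = ∑ p : Fin d × Fin d, u p.1 * (A p.1 p.2 * u p.2) := by
    simp [dotProduct, mulVec, Finset.mul_sum, Fintype.sum_prod_type]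
  have h2 : (u ⬝ᵥ A.mulVec u) ^ k
      = ∑ x : Fin k → Fin d × Fin d, ∏ j, u ((x j).1) * (A ((x j).1) ((x j).2) * u ((x j).2)) := by
    rw [h1, show (∑ p : Fin d × Fin d, u p.1 * (A p.1 p.2 * u p.2)) ^ k
        = ∏ _j : Fin k, ∑ p : Fin d × Fin d, u p.1 * (A p.1 p.2 * u p.2) by simp,
      Fintype.prod_sum]
  rw [h2, ← Equiv.sum_comp (Equiv.arrowProdEquivProdArrow (Fin k) (fun _ => Fin d) (fun _ => Fin d)).symm]
  simp only [dotProduct, mulVec, kronPow, Matrix.of_apply, Finset.mul_sum,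
    Fintype.sum_prod_type, Equiv.arrowProdEquivProdArrow]
  refine Finset.sum_congr rfl fun f _ => Finset.sum_congr rfl fun g _ => ?_
  simp [← Finset.prod_mul_distrib]

lemma kronPow_one {d k : ℕ} :
    kronPow (1 : Matrix (Fin d) (Fin d) ℝ) k = 1 := by
  ext f g
  by_cases h : f = g
  · subst h
    simp [kronPow, Matrix.one_apply]
  · obtain ⟨j, hj⟩ := Function.ne_iff.mp h
    rw [show (1 : Matrix (Fin k → Fin d) (Fin k → Fin d) ℝ) f g = 0 from Matrix.one_apply_ne h]
    exact Finset.prod_eq_zero (Finset.mem_univ j) (Matrix.one_apply_ne hj)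

lemma dot_mulVec_sum {n : Type*} [Fintype n] {ι : Type*} (s : Finset ι)
    (A : ι → Matrix n n ℝ) (w : n → ℝ) :
    w ⬝ᵥ (∑ j ∈ s, A j) *ᵥ w = ∑ j ∈ s, w ⬝ᵥ (A j) *ᵥ w := by
  induction s using Finset.cons_induction with
  | empty => simp
  | cons a s h ih => simp [Finset.sum_cons, Matrix.add_mulVec, dotProduct_add, ih]

lemma kron_vec_norm {d k : ℕ} (u : Fin d → ℝ) :
    (fun f : Fin k → Fin d => ∏ j, u (f j)) ⬝ᵥ (fun f : Fin k → Fin d => ∏ j, u (f j))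
      = (u ⬝ᵥ u) ^ k := by
  have h := kron_quad (k := k) (1 : Matrix (Fin d) (Fin d) ℝ) u
  rwa [kronPow_one, Matrix.one_mulVec, Matrix.one_mulVec] at h

/-- **Unboundedness of the moment-operator blocks when one batch is linearly unstable.**
Let `H₁, …, H_N` be symmetric PSD matrices, `H` uniform on them, `η > 0`.  If
`η λmax(H_i) > 2` for some `i` (expressed via the quadratic form: there is a unit
vector `u` with `η ⟨u, H_i u⟩ > 2`), then the spectral norms
`‖E[(I − ηH)^{⊗k}]‖` tend to infinity with `k`; the expectation is the uniform
average `(1/N) ∑ i (I − η H_i)^{⊗k}`. -/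
theorem stmt15 {d N : ℕ} (hN : 0 < N)
    (H : Fin N → Matrix (Fin d) (Fin d) ℝ) (hpsd : ∀ i, (H i).PosSemidef)
    (η : ℝ) (hη : 0 < η)
    (hunstable : ∃ (i : Fin N) (u : Fin d → ℝ),
      u ⬝ᵥ u = 1 ∧ 2 < η * (u ⬝ᵥ (H i).mulVec u)) :
    Tendsto (fun k : ℕ =>
        ‖Matrix.toEuclideanCLM (𝕜 := ℝ)
          ((N : ℝ)⁻¹ • ∑ i, kronPow ((1 : Matrix (Fin d) (Fin d) ℝ) - η • H i) k)‖)
      atTop atTop := by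
  obtain ⟨i, u, hu, hq⟩ := hunstable
  set c : ℝ := η * (u ⬝ᵥ (H i).mulVec u) - 1 with hc_def
  have hc : 1 < c := by simp [hc_def]; linarith
  -- quadratic forms
  set t : Fin N → ℝ := fun j => u ⬝ᵥ ((1 : Matrix (Fin d) (Fin d) ℝ) - η • H j).mulVec u with ht
  have htj : ∀ j, t j = 1 - η * (u ⬝ᵥ (H j).mulVec u) := by
    intro j
    simp [ht, Matrix.sub_mulVec, Matrix.smul_mulVec, dotProduct_sub, dotProduct_smul,
      Matrix.one_mulVec, hu, smul_eq_mul]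
  have hti : t i = -c := by rw [htj]; ring
  have htle : ∀ j, t j ≤ 1 := by
    intro j
    have h0 : 0 ≤ u ⬝ᵥ (H j).mulVec u := by
      have := (hpsd j).dotProduct_mulVec_nonneg u
      simpa using this
    rw [htj]
    nlinarith
  -- the key scalar bound
  have key : ∀ k : ℕ, c ^ k - N ≤ |∑ j, (t j) ^ k| := by
    intro k
    rcases Nat.even_or_odd k with hk | hk
    · have h1 : c ^ k ≤ (t i) ^ k := by
        rw [hti, hk.neg_pow]
      have h2 : (t i) ^ k ≤ ∑ j, (t j) ^ k := by
        refine Finset.single_le_sum (fun j _ => hk.pow_nonneg (t j)) (Finset.mem_univ i)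
      calc c ^ k - N ≤ c ^ k := by
            simp [Nat.cast_nonneg]
        _ ≤ ∑ j, (t j) ^ k := le_trans h1 h2
        _ ≤ |∑ j, (t j) ^ k| := le_abs_self _
    · have h1 : (t i) ^ k = -c ^ k := by rw [hti, hk.neg_pow]
      have h2 : ∑ j, (t j) ^ k ≤ N - c ^ k := by
        have : ∑ j, (t j) ^ k = (t i) ^ k + ∑ j ∈ Finset.univ.erase i, (t j) ^ k :=
          (Finset.add_sum_erase Finset.univ (fun j => (t j) ^ k) (Finset.mem_univ i)).symm
        rw [this, h1]
        have h3 : ∑ j ∈ Finset.univ.erase i, (t j) ^ k ≤ (N : ℝ) := by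
          calc ∑ j ∈ Finset.univ.erase i, (t j) ^ k ≤ ∑ _j ∈ Finset.univ.erase i, (1:ℝ) := by
                refine Finset.sum_le_sum fun j _ => ?_
                calc (t j) ^ k ≤ 1 ^ k := hk.strictMono_pow.monotone (htle j)
                  _ = 1 := one_pow k
            _ = (Finset.univ.erase i).card := by simp
            _ ≤ (N : ℝ) := by
                have := Finset.card_le_card (Finset.erase_subset i (Finset.univ : Finset (Fin N)))
                simpa using Nat.cast_le.mpr (le_trans this (by simp))
        linarith
      calc c ^ k - N ≤ -∑ j, (t j) ^ k := by linarith
        _ ≤ |∑ j, (t j) ^ k| := neg_le_abs _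
  -- norm lower bound via the test vector
  have hNpos : (0:ℝ) < N := by exact_mod_cast hN
  have lower : ∀ k : ℕ, c ^ k / N - 1 ≤
      ‖Matrix.toEuclideanCLM (𝕜 := ℝ)
          ((N : ℝ)⁻¹ • ∑ j, kronPow ((1 : Matrix (Fin d) (Fin d) ℝ) - η • H j) k)‖ := by
    intro k
    set v : (Fin k → Fin d) → ℝ := fun f => ∏ j, u (f j) with hv
    set M : Matrix (Fin k → Fin d) (Fin k → Fin d) ℝ :=
      (N : ℝ)⁻¹ • ∑ j, kronPow ((1 : Matrix (Fin d) (Fin d) ℝ) - η • H j) k with hM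
    set x : EuclideanSpace ℝ (Fin k → Fin d) := (WithLp.equiv 2 _).symm v with hx
    have hxnorm : ‖x‖ = 1 := by
      have h1 : (inner ℝ x x : ℝ) = (1:ℝ) := by
        have h := kron_vec_norm (k := k) u
        rw [hu, one_pow] at h
        rw [PiLp.inner_apply]
        simp only [dotProduct] at h
        rw [← h]
        refine Finset.sum_congr rfl fun f _ => ?_
        rw [real_inner_self_eq_norm_sq, Real.norm_eq_abs, sq_abs, sq]
        rfl
      have := real_inner_self_eq_norm_sq x
      nlinarith [norm_nonneg x]
    have hTx : (inner ℝ x (Matrix.toEuclideanCLM (𝕜 := ℝ) M x) : ℝ) = v ⬝ᵥ M.mulVec v := by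
      rw [hx, WithLp.equiv_symm_apply, Matrix.toEuclideanCLM_toLp, PiLp.inner_apply]
      simp [dotProduct, Matrix.toLin'_apply, RCLike.inner_apply]
      exact Finset.sum_congr rfl fun _ _ => mul_comm _ _
    have hquad : v ⬝ᵥ M.mulVec v = (N : ℝ)⁻¹ * ∑ j, (t j) ^ k := by
      rw [hM, Matrix.smul_mulVec, dotProduct_smul, smul_eq_mul]
      congr 1
      rw [dot_mulVec_sum]
      exact Finset.sum_congr rfl fun j _ => kron_quad _ u
    have habs : |(inner ℝ x (Matrix.toEuclideanCLM (𝕜 := ℝ) M x) : ℝ)|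
        ≤ ‖Matrix.toEuclideanCLM (𝕜 := ℝ) M‖ := by
      calc |(inner ℝ x (Matrix.toEuclideanCLM (𝕜 := ℝ) M x) : ℝ)|
          ≤ ‖x‖ * ‖Matrix.toEuclideanCLM (𝕜 := ℝ) M x‖ := abs_real_inner_le_norm _ _
        _ ≤ ‖x‖ * (‖Matrix.toEuclideanCLM (𝕜 := ℝ) M‖ * ‖x‖) := by
            refine mul_le_mul_of_nonneg_left ((Matrix.toEuclideanCLM (𝕜 := ℝ) M).le_opNorm x)
              (norm_nonneg x)
        _ = ‖Matrix.toEuclideanCLM (𝕜 := ℝ) M‖ := by rw [hxnorm]; ring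
    have : c ^ k / N - 1 ≤ |(inner ℝ x (Matrix.toEuclideanCLM (𝕜 := ℝ) M x) : ℝ)| := by
      have hNinv : (0:ℝ) ≤ (N:ℝ)⁻¹ := by positivity
      rw [hTx, hquad, abs_mul, abs_of_nonneg hNinv]
      have h4 : (N:ℝ)⁻¹ * (c ^ k - N) ≤ (N:ℝ)⁻¹ * |∑ j, (t j) ^ k| :=
        mul_le_mul_of_nonneg_left (key k) (by positivity)
      calc c ^ k / N - 1 = (N:ℝ)⁻¹ * (c ^ k - N) := by field_simp
        _ ≤ (N:ℝ)⁻¹ * |∑ j, (t j) ^ k| := h4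
    exact le_trans this habs
  refine tendsto_atTop_mono lower ?_
  have h5 : Tendsto (fun k : ℕ => c ^ k) atTop atTop :=
    tendsto_pow_atTop_atTop_of_one_lt hc
  have h6 : Tendsto (fun k : ℕ => c ^ k / N) atTop atTop :=
    Tendsto.atTop_div_const hNpos h5
  exact tendsto_atTop_add_const_right _ _ h6
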